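/- Let 𝒞 and 𝒟 be finitely complete categories and F : 𝒟 → 𝒞 a functor which preserves pullbacks and reflects isomorphisms. If 𝒞 is a majority category, then 𝒟 is a majority category. -/

import Mathlib

open CategoryTheory CategoryTheory.Limits

/-- The triple of morphisms `(a, b, c)` is related by the ternary relation
`(r₁, r₂, r₃)`. -/
def TernaryRelated {C : Type*} [Category C] {R A B D S : C}
    (r₁ : R ⟶ A) (r₂ : R ⟶ B) (r₃ : R ⟶ D) (a : S ⟶ A) (b : S ⟶ B) (c : S ⟶ D) : Prop :=
  ∃ f : S ⟶ R, f ≫ r₁ = a ∧ f ≫ r₂ = b ∧ f ≫ r₃ = c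

/-- A category is a majority category when every (jointly monomorphic) internal ternary
relation is strictly closed with respect to the majority matrix. -/
def IsMajorityCategory (C : Type*) [Category C] : Prop :=
  ∀ ⦃A B D R : C⦄ (r₁ : R ⟶ A) (r₂ : R ⟶ B) (r₃ : R ⟶ D),
    (∀ ⦃S : C⦄ (f g : S ⟶ R),
      f ≫ r₁ = g ≫ r₁ → f ≫ r₂ = g ≫ r₂ → f ≫ r₃ = g ≫ r₃ → f = g) →
    ∀ ⦃S : C⦄ (a₁ a₂ : S ⟶ A) (b₁ b₂ : S ⟶ B) (c₁ c₂ : S ⟶ D),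
      TernaryRelated r₁ r₂ r₃ a₁ b₁ c₂ →
      TernaryRelated r₁ r₂ r₃ a₁ b₂ c₁ →
      TernaryRelated r₁ r₂ r₃ a₂ b₁ c₁ →
      TernaryRelated r₁ r₂ r₃ a₁ b₁ c₁

/-- If `F : D ⥤ C` preserves pullbacks and reflects isomorphisms between finitely
complete categories, and `C` is a majority category, then so is `D`. -/
theorem majority_reflects {C : Type*} [Category C] {D : Type*} [Category D]
    [HasFiniteLimits C] [HasFiniteLimits D]
    (F : D ⥤ C) [PreservesLimitsOfShape WalkingCospan F] [F.ReflectsIsomorphisms]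
    (hmaj : IsMajorityCategory C) : IsMajorityCategory D := by
  intro A B E R r₁ r₂ r₃ hm S a₁ a₂ b₁ b₂ c₁ c₂ hc hb ha
  obtain ⟨fc, hfc₁, hfc₂, hfc₃⟩ := hc
  obtain ⟨fb, hfb₁, hfb₂, hfb₃⟩ := hb
  obtain ⟨fa, hfa₁, hfa₂, hfa₃⟩ := ha
  -- Build the "product" A × B × E in D as iterated pullbacks over the terminal object.
  let P₁ : D := pullback (terminal.from B) (terminal.from E)
  let P : D := pullback (terminal.from A) (terminal.from P₁)
  let pA : P ⟶ A := pullback.fst _ _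
  let p23 : P ⟶ P₁ := pullback.snd _ _
  let pB : P ⟶ B := p23 ≫ pullback.fst _ _
  let pE : P ⟶ E := p23 ≫ pullback.snd _ _
  -- tupling
  have tup : ∀ {T : D} (x : T ⟶ A) (y : T ⟶ B) (z : T ⟶ E),
      ∃ t : T ⟶ P, t ≫ pA = x ∧ t ≫ pB = y ∧ t ≫ pE = z := by
    intro T x y z
    refine ⟨pullback.lift x (pullback.lift y z (Subsingleton.elim _ _))
      (Subsingleton.elim _ _), ?_, ?_, ?_⟩
    · simp [pA]
      exact pullback.lift_fst _ _ _
    · simp [pB, p23]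
      rw [← Category.assoc]
      erw [pullback.lift_snd]
      exact pullback.lift_fst _ _ _
    · simp [pE, p23]
      rw [← Category.assoc]
      erw [pullback.lift_snd]
      exact pullback.lift_snd _ _ _
  obtain ⟨m₀, hmA, hmB, hmE⟩ := tup r₁ r₂ r₃
  obtain ⟨u₀, huA, huB, huE⟩ := tup a₁ b₁ c₁
  -- joint monicity of the mapped projections in C
  have hjm : ∀ {T : C} (x y : T ⟶ F.obj P),
      x ≫ F.map pA = y ≫ F.map pA → x ≫ F.map pB = y ≫ F.map pB →
      x ≫ F.map pE = y ≫ F.map pE → x = y := by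
    intro T x y hA hB hE
    have h23 : x ≫ F.map p23 = y ≫ F.map p23 := by
      have := pullbackComparison F (terminal.from B) (terminal.from E)
      rw [← cancel_mono (pullbackComparison F (terminal.from B) (terminal.from E))]
      apply pullback.hom_ext
      · simp only [Category.assoc, pullbackComparison_comp_fst, ← F.map_comp]
        simpa [pB] using hB
      · simp only [Category.assoc, pullbackComparison_comp_snd, ← F.map_comp]
        simpa [pE] using hE
    rw [← cancel_mono (pullbackComparison F (terminal.from A) (terminal.from P₁))]
    apply pullback.hom_ext
    · simpa only [Category.assoc, pullbackComparison_comp_fst] using hA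
    · simpa only [Category.assoc, pullbackComparison_comp_snd] using h23
  -- m₀ is mono in D
  have hmono : Mono m₀ := by
    constructor
    intro T x y h
    refine hm x y ?_ ?_ ?_
    · rw [← hmA, ← Category.assoc, ← Category.assoc, h]
    · rw [← hmB]; simp only [pB, ← Category.assoc, h]
    · rw [← hmE]; simp only [pE, ← Category.assoc, h]
  have hFmono : Mono (F.map m₀) := F.map_mono m₀
  -- the image relation (F r₁, F r₂, F r₃) is jointly monic
  have jm : ∀ ⦃T : C⦄ (f g : T ⟶ F.obj R),
      f ≫ F.map r₁ = g ≫ F.map r₁ → f ≫ F.map r₂ = g ≫ F.map r₂ →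
      f ≫ F.map r₃ = g ≫ F.map r₃ → f = g := by
    intro T x y h₁ h₂ h₃
    have : x ≫ F.map m₀ = y ≫ F.map m₀ := by
      apply hjm
      · simp only [Category.assoc, ← F.map_comp, hmA]; exact h₁
      · simp only [Category.assoc, ← F.map_comp, hmB]; exact h₂
      · simp only [Category.assoc, ← F.map_comp, hmE]; exact h₃
    exact (cancel_mono (F.map m₀)).1 this
  -- apply the majority property in C
  obtain ⟨f, hf₁, hf₂, hf₃⟩ :=
    hmaj (F.map r₁) (F.map r₂) (F.map r₃) jm (F.map a₁) (F.map a₂) (F.map b₁) (F.map b₂)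
      (F.map c₁) (F.map c₂)
      ⟨F.map fc, by rw [← F.map_comp, hfc₁], by rw [← F.map_comp, hfc₂],
        by rw [← F.map_comp, hfc₃]⟩
      ⟨F.map fb, by rw [← F.map_comp, hfb₁], by rw [← F.map_comp, hfb₂],
        by rw [← F.map_comp, hfb₃]⟩
      ⟨F.map fa, by rw [← F.map_comp, hfa₁], by rw [← F.map_comp, hfa₂],
        by rw [← F.map_comp, hfa₃]⟩
  -- f factors F u₀ through F m₀
  have hfm : f ≫ F.map m₀ = F.map u₀ := by
    apply hjm
    · rw [Category.assoc, ← F.map_comp, hmA, ← F.map_comp, huA]; exact hf₁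
    · rw [Category.assoc, ← F.map_comp, hmB, ← F.map_comp, huB]; exact hf₂
    · rw [Category.assoc, ← F.map_comp, hmE, ← F.map_comp, huE]; exact hf₃
  -- the pullback of m₀ along u₀ in D
  let q : pullback m₀ u₀ ⟶ S := pullback.snd m₀ u₀
  have hqmono : Mono q := pullback.snd_of_mono
  -- F q is split epi
  let s : F.obj S ⟶ pullback (F.map m₀) (F.map u₀) :=
    pullback.lift f (𝟙 (F.obj S)) (by simpa using hfm)
  have hsec : (s ≫ inv (pullbackComparison F m₀ u₀)) ≫ F.map q = 𝟙 (F.obj S) := by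
    have : inv (pullbackComparison F m₀ u₀) ≫ F.map q = pullback.snd _ _ := by
      rw [IsIso.inv_comp_eq, pullbackComparison_comp_snd]
    rw [Category.assoc, this]
    simp [s]
    exact pullback.lift_snd _ _ _
  have hsplit : IsSplitEpi (F.map q) := ⟨⟨⟨_, hsec⟩⟩⟩
  have hFq : IsIso (F.map q) := by
    have : Mono (F.map q) := F.map_mono q
    exact isIso_of_mono_of_isSplitEpi _
  have hq : IsIso q := isIso_of_reflects_iso q F
  -- extract the witness
  refine ⟨inv q ≫ pullback.fst m₀ u₀, ?_, ?_, ?_⟩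
  · rw [← huA, Category.assoc, ← hmA, ← Category.assoc (pullback.fst m₀ u₀),
      pullback.condition]
    simp [q]
  · rw [← huB, Category.assoc, ← hmB, ← Category.assoc (pullback.fst m₀ u₀),
      pullback.condition]
    simp [q]
  · rw [← huE, Category.assoc, ← hmE, ← Category.assoc (pullback.fst m₀ u₀),
      pullback.condition]
    simp [q]
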